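/- Let N ≥ 2 and α ∈ (0,1). Then lim_{R→0⁺} ν(R) = −4 ∫_{ℝ^{N-1}} (|t|² + 4)^{−(N+α)/2} dt, and this limit is finite and strictly negative. -/

import Mathlib

open MeasureTheory Real Filter Topology

noncomputable section

abbrev ES (m : ℕ) : Type := EuclideanSpace ℝ (Fin (m + 1))

/-- The eigenvalue function
`ν(R) = 2R^{1+α} (∫ (1-cos t₁)/|t|^{N+α} dt - ∫ (1+cos t₁)/(|t|²+4R²)^{(N+α)/2} dt)`,
with `N = m + 2`. -/
def nu (m : ℕ) (α : ℝ) (R : ℝ) : ℝ :=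
  2 * R ^ (1 + α) *
    ((∫ t : ES m, (1 - Real.cos (t 0)) / ‖t‖ ^ ((m : ℝ) + 2 + α)) -
      ∫ t : ES m, (1 + Real.cos (t 0)) / (‖t‖ ^ 2 + 4 * R ^ 2) ^ (((m : ℝ) + 2 + α) / 2))

/-- Scaling change of variables on `ES m`. -/
lemma aux_scale (m : ℕ) (f : ES m → ℝ) {a : ℝ} (ha : 0 < a) :
    ∫ t : ES m, f t = a ^ (m + 1) * ∫ s : ES m, f (a • s) := by
  rw [MeasureTheory.Measure.integral_comp_smul volume f a]
  rw [finrank_euclideanSpace_fin, abs_of_nonneg (by positivity), smul_eq_mul]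
  field_simp

/-- Integrability of `(‖t‖² + c)^{-p}` for `p > (m+1)/2`, `c ≥ 1`. -/
lemma aux_integrable (m : ℕ) {p : ℝ} (hp : ((m : ℝ) + 1) / 2 < p) {c : ℝ} (hc : 1 ≤ c) :
    Integrable (fun t : ES m => (‖t‖ ^ 2 + c) ^ (-p)) := by
  have hp0 : 0 < p := lt_of_le_of_lt (by positivity) hp
  have h1 : Integrable (fun t : ES m => ((1 : ℝ) + ‖t‖ ^ 2) ^ (-(2 * p) / 2)) :=
    integrable_rpow_neg_one_add_norm_sq
      (by rw [finrank_euclideanSpace_fin]; push_cast; linarith)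
  refine h1.mono' ?_ (ae_of_all _ fun t => ?_)
  · exact (((continuous_norm.pow 2).add continuous_const).rpow_const
      (fun t => Or.inl (ne_of_gt (by nlinarith [sq_nonneg ‖t‖] : (0:ℝ) < ‖t‖ ^ 2 + c)))).aestronglyMeasurable
  · rw [Real.norm_eq_abs, abs_of_nonneg (rpow_nonneg (by positivity) _),
      show -(2 * p) / 2 = -p by ring]
    exact Real.rpow_le_rpow_of_nonpos (by positivity) (by linarith) (by linarith)

theorem statement_10 (m : ℕ) (α : ℝ) (hα : α ∈ Set.Ioo (0 : ℝ) 1) :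
    Integrable (fun t : ES m => (‖t‖ ^ 2 + 4) ^ (-(((m : ℝ) + 2 + α) / 2))) ∧
      Tendsto (nu m α) (𝓝[>] (0 : ℝ))
        (𝓝 (-4 * ∫ t : ES m, (‖t‖ ^ 2 + 4) ^ (-(((m : ℝ) + 2 + α) / 2)))) ∧
      -4 * (∫ t : ES m, (‖t‖ ^ 2 + 4) ^ (-(((m : ℝ) + 2 + α) / 2))) < 0 := by
  obtain ⟨hα0, hα1⟩ := hα
  set p : ℝ := ((m : ℝ) + 2 + α) / 2 with hp
  have hp_gt : ((m : ℝ) + 1) / 2 < p := by rw [hp]; linarith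
  have hp0 : 0 < p := lt_of_le_of_lt (by positivity) hp_gt
  have hI4 : Integrable (fun t : ES m => (‖t‖ ^ 2 + 4) ^ (-p)) :=
    aux_integrable m hp_gt (by norm_num)
  have hI1 : Integrable (fun t : ES m => (‖t‖ ^ 2 + 1) ^ (-p)) :=
    aux_integrable m hp_gt le_rfl
  set I : ℝ := ∫ t : ES m, (‖t‖ ^ 2 + 4) ^ (-p) with hI_def
  set I₁ : ℝ := ∫ t : ES m, (‖t‖ ^ 2 + 1) ^ (-p) with hI1_def
  set A : ℝ := ∫ t : ES m, (1 - Real.cos (t 0)) / ‖t‖ ^ ((m : ℝ) + 2 + α) with hA_def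
  -- positivity of I
  have hIpos : 0 < I := by
    rw [hI_def, integral_pos_iff_support_of_nonneg
      (fun t => rpow_nonneg (by positivity) _) hI4]
    have hsupp : (Function.support fun t : ES m => (‖t‖ ^ 2 + 4) ^ (-p)) = Set.univ := by
      ext t
      simp only [Function.mem_support, Set.mem_univ, iff_true]
      positivity
    rw [hsupp]
    exact isOpen_univ.measure_pos volume Set.univ_nonempty
  -- the scalar identity
  have hsc : ∀ R : ℝ, 0 < R →
      2 * R ^ (1 + α) * ((2 * R) ^ (m + 1) * (4 * R ^ 2) ^ (-p)) = 2 ^ (-α) := by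
    intro R hR
    have h2R : (0 : ℝ) < 2 * R := by positivity
    have e1 : ((4 * R ^ 2 : ℝ)) ^ (-p) = (2 * R) ^ (2 * (-p)) := by
      rw [show (4 * R ^ 2 : ℝ) = (2 * R) ^ (2 : ℕ) by ring,
        ← Real.rpow_natCast (2 * R) 2, ← Real.rpow_mul h2R.le]
      norm_num
    have e2 : ((2 * R : ℝ)) ^ (m + 1) = (2 * R) ^ ((m : ℝ) + 1) := by
      rw [← Real.rpow_natCast (2 * R) (m + 1)]
      norm_num
    rw [e1, e2, ← Real.rpow_add h2R, show (m : ℝ) + 1 + 2 * (-p) = -(1 + α) by rw [hp]; ring,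
      Real.mul_rpow (by norm_num) hR.le]
    have hr : R ^ (1 + α) * R ^ (-(1 + α)) = 1 := by
      rw [← Real.rpow_add hR, add_neg_cancel, Real.rpow_zero]
    have h2 : (2 : ℝ) * 2 ^ (-(1 + α)) = 2 ^ (-α) := by
      rw [show (2 : ℝ) * 2 ^ (-(1 + α)) = 2 ^ (1 : ℝ) * 2 ^ (-(1 + α)) by rw [Real.rpow_one],
        ← Real.rpow_add two_pos]
      congr 1
      ring
    calc 2 * R ^ (1 + α) * (2 ^ (-(1 + α)) * R ^ (-(1 + α)))
        = 2 * 2 ^ (-(1 + α)) * (R ^ (1 + α) * R ^ (-(1 + α))) := by ring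
      _ = 2 ^ (-α) := by rw [hr, h2, mul_one]
  -- change of variables for the second integral in nu
  have hB : ∀ R : ℝ, 0 < R →
      (∫ t : ES m, (1 + Real.cos (t 0)) / (‖t‖ ^ 2 + 4 * R ^ 2) ^ p)
        = (2 * R) ^ (m + 1) * ((4 * R ^ 2) ^ (-p) *
            ∫ s : ES m, (1 + Real.cos (2 * R * (s 0))) * (‖s‖ ^ 2 + 1) ^ (-p)) := by
    intro R hR
    have h2R : (0 : ℝ) < 2 * R := by positivity
    rw [aux_scale m _ h2R]
    congr 1
    have hpt : ∀ s : ES m,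
        (1 + Real.cos (((2 * R) • s) 0)) / (‖(2 * R) • s‖ ^ 2 + 4 * R ^ 2) ^ p
          = (4 * R ^ 2) ^ (-p) * ((1 + Real.cos (2 * R * (s 0))) * (‖s‖ ^ 2 + 1) ^ (-p)) := by
      intro s
      have h0 : ((2 * R) • s) 0 = 2 * R * (s 0) := by simp [smul_eq_mul]
      rw [h0, norm_smul, Real.norm_eq_abs, abs_of_nonneg h2R.le, mul_pow,
        show ((2 * R) ^ 2 * ‖s‖ ^ 2 + 4 * R ^ 2 : ℝ) = (4 * R ^ 2) * (‖s‖ ^ 2 + 1) by ring,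
        Real.mul_rpow (by positivity) (by positivity),
        Real.rpow_neg (by positivity : (0 : ℝ) ≤ 4 * R ^ 2),
        Real.rpow_neg (by positivity : (0 : ℝ) ≤ ‖s‖ ^ 2 + 1),
        div_eq_mul_inv, mul_inv]
      ring
    simp_rw [hpt]
    rw [integral_const_mul]
  -- scaling for I
  have hscale : I = 2 ^ (m + 1) * ((4 : ℝ) ^ (-p) * I₁) := by
    rw [hI_def, aux_scale m _ (by norm_num : (0 : ℝ) < 2)]
    congr 1
    have hpt : ∀ s : ES m, ((‖(2 : ℝ) • s‖ ^ 2 + 4 : ℝ)) ^ (-p)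
        = (4 : ℝ) ^ (-p) * (‖s‖ ^ 2 + 1) ^ (-p) := by
      intro s
      rw [norm_smul, Real.norm_eq_abs, abs_of_nonneg (by norm_num : (0 : ℝ) ≤ 2), mul_pow,
        show ((2 : ℝ) ^ 2 * ‖s‖ ^ 2 + 4 : ℝ) = 4 * (‖s‖ ^ 2 + 1) by ring,
        Real.mul_rpow (by norm_num) (by positivity)]
    simp_rw [hpt]
    rw [integral_const_mul, hI1_def]
  -- dominated convergence
  have hC : Tendsto (fun R : ℝ => ∫ s : ES m, (1 + Real.cos (2 * R * (s 0))) * (‖s‖ ^ 2 + 1) ^ (-p))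
      (𝓝[>] 0) (𝓝 (∫ s : ES m, 2 * (‖s‖ ^ 2 + 1) ^ (-p))) := by
    apply tendsto_integral_filter_of_dominated_convergence
      (fun s : ES m => 2 * (‖s‖ ^ 2 + 1) ^ (-p))
    · filter_upwards with R
      apply Continuous.aestronglyMeasurable
      apply Continuous.mul
      · fun_prop
      · exact ((continuous_norm.pow 2).add continuous_const).rpow_const
          (fun s => Or.inl (ne_of_gt (by positivity : (0:ℝ) < ‖s‖ ^ 2 + 1)))
    · filter_upwards with R
      filter_upwards with s
      rw [norm_mul, Real.norm_eq_abs, Real.norm_eq_abs,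
        abs_of_nonneg (rpow_nonneg (by positivity) _)]
      apply mul_le_mul_of_nonneg_right _ (rpow_nonneg (by positivity) _)
      rw [abs_le]
      constructor
      · nlinarith [Real.neg_one_le_cos (2 * R * (s 0))]
      · nlinarith [Real.cos_le_one (2 * R * (s 0))]
    · exact hI1.const_mul 2
    · filter_upwards with s
      refine Tendsto.mono_left ?_ nhdsWithin_le_nhds
      have hval2 : (2 : ℝ) * (‖s‖ ^ 2 + 1) ^ (-p)
          = (1 + Real.cos (2 * (0:ℝ) * (s 0))) * (‖s‖ ^ 2 + 1) ^ (-p) := by norm_num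
      rw [hval2]
      exact Continuous.tendsto (by fun_prop) 0
  -- first term tends to 0
  have hA0 : Tendsto (fun R : ℝ => 2 * R ^ (1 + α) * A) (𝓝[>] 0) (𝓝 0) := by
    have h1 : Tendsto (fun R : ℝ => R ^ (1 + α)) (𝓝 0) (𝓝 0) := by
      have := (Real.continuousAt_rpow_const 0 (1 + α) (Or.inr (by linarith))).tendsto
      simpa [Real.zero_rpow (by linarith : (1 : ℝ) + α ≠ 0)] using this
    have h2 := (h1.const_mul 2).mul_const A
    simpa using h2.mono_left nhdsWithin_le_nhds
  -- combined limit
  have key : Tendsto (fun R : ℝ => 2 * R ^ (1 + α) * A -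
      2 ^ (-α) * ∫ s : ES m, (1 + Real.cos (2 * R * (s 0))) * (‖s‖ ^ 2 + 1) ^ (-p))
      (𝓝[>] 0) (𝓝 (0 - 2 ^ (-α) * ∫ s : ES m, 2 * (‖s‖ ^ 2 + 1) ^ (-p))) :=
    hA0.sub (hC.const_mul _)
  have heq : (fun R : ℝ => 2 * R ^ (1 + α) * A -
      2 ^ (-α) * ∫ s : ES m, (1 + Real.cos (2 * R * (s 0))) * (‖s‖ ^ 2 + 1) ^ (-p))
      =ᶠ[𝓝[>] (0 : ℝ)] nu m α := by
    filter_upwards [self_mem_nhdsWithin] with R hR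
    have hR' : (0 : ℝ) < R := hR
    simp only [nu, ← hp, ← hA_def]
    rw [hB R hR', mul_sub]
    congr 1
    rw [← hsc R hR']
    ring
  -- identify the limit value
  have hval : 0 - 2 ^ (-α) * (∫ s : ES m, 2 * (‖s‖ ^ 2 + 1) ^ (-p)) = -4 * I := by
    rw [integral_const_mul, ← hI1_def, hscale]
    have h1' := hsc 1 one_pos
    have h1'' : 2 * ((2 : ℝ) ^ (m + 1) * 4 ^ (-p)) = 2 ^ (-α) := by
      simpa using h1'
    linear_combination (2*I₁) * h1''
  refine ⟨hI4, ?_, by linarith⟩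
  rw [← hval]
  exact key.congr' heq
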